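/- arXiv:2106.06634 — 4 statements merged into one kernel-verified Lean document; each statement's English description precedes it below -/
import Mathlib

section
/- Let N ≥ 2 and M ≥ 2 be integers, let c : Fin N → ((Fin N → ℕ) → ℝ) be a family of real coefficients, let z₀ : Fin N → ℝ be initial data, and let K be a real number such that for every n, K·z₀(n) = (1 − M)·∑_{m : Fin N → ℕ, ∑_k m(k) = M} c(n)(m)·∏_{k} z₀(k)^{m(k)}. Define z(n)(t) := z₀(n)·(1 + K·t)^{1/(1 − M)} (real power of the positive base 1 + K·t). Then for every real t with 1 + K·t > 0 and every n, the function z(n) is differentiable at t with derivative equal to ∑_{m : Fin N → ℕ, ∑_k m(k) = M} c(n)(m)·∏_{k} z(k)(t)^{m(k)}; i.e., z solves the homogeneous polynomial system ż_n = ∑_m c_{n,m} ∏_k z_k^{m_k}. -/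
open Finset

/-- The finite set of multi-indices `m : Fin N → ℕ` with `∑ k, m k = M`. -/
def multiIdx (N M : ℕ) : Finset (Fin N → ℕ) :=
  (Fintype.piFinset fun _ : Fin N => Finset.range (M + 1)).filter fun m => ∑ k, m k = M

/-- The special solution `z_n(t) = z_n(0) (1 + K t)^{1/(1-M)}` solves the homogeneous
polynomial system `ż_n = ∑_m c_{n,m} ∏_k z_k^{m_k}`, provided the algebraic constraints
`K z_n(0) = (1-M) ∑_m c_{n,m} ∏_k z_k(0)^{m_k}` hold. -/
theorem statement0 (N M : ℕ) (hN : 2 ≤ N) (hM : 2 ≤ M)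
    (c : Fin N → (Fin N → ℕ) → ℝ) (z₀ : Fin N → ℝ) (K : ℝ)
    (hK : ∀ n : Fin N,
      K * z₀ n = (1 - (M : ℝ)) * ∑ m ∈ multiIdx N M, c n m * ∏ k, z₀ k ^ m k)
    (z : Fin N → ℝ → ℝ)
    (hz : ∀ (n : Fin N) (t : ℝ),
      z n t = z₀ n * (1 + K * t) ^ ((1 : ℝ) / (1 - (M : ℝ))))
    (t : ℝ) (ht : 0 < 1 + K * t) (n : Fin N) :
    HasDerivAt (z n) (∑ m ∈ multiIdx N M, c n m * ∏ k, z k t ^ m k) t := by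
  have hM1 : (1 : ℝ) - (M : ℝ) ≠ 0 := by
    have : (2:ℝ) ≤ (M:ℝ) := by exact_mod_cast hM
    linarith
  set α : ℝ := (1 : ℝ) / (1 - (M : ℝ)) with hα
  -- derivative of the inner affine function
  have h1 : HasDerivAt (fun s : ℝ => 1 + K * s) K t := by
    simpa using ((hasDerivAt_id t).const_mul K).const_add 1
  have h2 : HasDerivAt (fun s : ℝ => (1 + K * s) ^ α)
      (α * (1 + K * t) ^ (α - 1) * K) t := by
    have := h1.rpow_const (p := α) (Or.inl (ne_of_gt ht))
    convert this using 1; ring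
  have h3 : HasDerivAt (z n) (z₀ n * (α * (1 + K * t) ^ (α - 1) * K)) t := by
    have := h2.const_mul (z₀ n)
    have hfun : (fun s : ℝ => z₀ n * (1 + K * s) ^ α) = z n := by
      funext s; rw [hz n s]
    rw [hfun] at this
    exact this
  convert h3 using 1
  -- rewrite the RHS sum
  have hprod : ∀ m ∈ multiIdx N M,
      (∏ k, z k t ^ m k) = (∏ k, z₀ k ^ m k) * (1 + K * t) ^ (α * M) := by
    intro m hm
    have hsum : ∑ k, m k = M := (Finset.mem_filter.mp hm).2
    have : (∏ k, z k t ^ m k)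
        = (∏ k, z₀ k ^ m k) * ∏ k, ((1 + K * t) ^ α) ^ m k := by
      rw [← Finset.prod_mul_distrib]
      refine Finset.prod_congr rfl fun k _ => ?_
      rw [hz k t, mul_pow]
    rw [this, Finset.prod_pow_eq_pow_sum, hsum,
      ← Real.rpow_natCast ((1 + K * t) ^ α) M, ← Real.rpow_mul ht.le]
  rw [Finset.sum_congr rfl fun m hm => by rw [hprod m hm, ← mul_assoc]]
  rw [← Finset.sum_mul]
  have hKn := hK n
  have hS : ∑ m ∈ multiIdx N M, c n m * ∏ k, z₀ k ^ m k
      = K * z₀ n / (1 - (M : ℝ)) := by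
    field_simp
    linarith [hKn]
  rw [hS]
  have hα1 : α * (1 - (M : ℝ)) = 1 := by
    rw [hα]; field_simp
  have hexp : α - 1 = α * M := by
    linear_combination hα1
  rw [hexp]
  field_simp [hα]
  linear_combination (-(K * z₀ n)) * hα1
end

section
/- Let N ≥ 2 and M ≥ 2 be integers, ω a nonzero real number, and c : Fin N → ((Fin N → ℕ) → ℂ) complex coefficients, and set τ(t) := (exp(iωt) − 1)/(iω) for t ∈ ℝ. Suppose z : ℂ → Fin N → ℂ is such that for every real t and every n, the function ζ ↦ z(ζ)(n) has complex derivative at τ(t) equal to ∑_{m : Fin N → ℕ, ∑_k m(k) = M} c(n)(m)·∏_{k} z(τ(t))(k)^{m(k)}. Define w(n)(t) := exp(iωt/(M − 1))·z(τ(t))(n). Then for every real t and every n, w(n) has derivative at t equal to (iω/(M − 1))·w(n)(t) + ∑_{m : Fin N → ℕ, ∑_k m(k) = M} c(n)(m)·∏_{k} w(k)(t)^{m(k)}; i.e., the change of variables transforms any solution of the homogeneous system into a solution of the autonomous modified system ẇ_n = (iω/(M−1))·w_n + ∑_m c_{n,m} ∏_k w_k^{m_k}. -/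
open Finset Complex

/-- The change of variables `w_n(t) = exp(iωt/(M-1)) z_n(τ(t))`,
`τ(t) = (exp(iωt) - 1)/(iω)`, transforms any solution of the homogeneous system
`ż_n = ∑_m c_{n,m} ∏_k z_k^{m_k}` into a solution of the modified autonomous system
`ẇ_n = (iω/(M-1)) w_n + ∑_m c_{n,m} ∏_k w_k^{m_k}`. -/
theorem statement3 (N M : ℕ) (hN : 2 ≤ N) (hM : 2 ≤ M)
    (ω : ℝ) (hω : ω ≠ 0)
    (c : Fin N → (Fin N → ℕ) → ℂ)
    (τ : ℝ → ℂ)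
    (hτ : ∀ t : ℝ, τ t = (Complex.exp (Complex.I * ω * t) - 1) / (Complex.I * ω))
    (z : ℂ → Fin N → ℂ)
    (hz : ∀ (t : ℝ) (n : Fin N),
      HasDerivAt (fun ζ : ℂ => z ζ n)
        (∑ m ∈ multiIdx N M, c n m * ∏ k, z (τ t) k ^ m k) (τ t))
    (w : Fin N → ℝ → ℂ)
    (hw : ∀ (n : Fin N) (t : ℝ),
      w n t = Complex.exp (Complex.I * ω * t / ((M : ℂ) - 1)) * z (τ t) n)
    (t : ℝ) (n : Fin N) :
    HasDerivAt (w n)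
      (Complex.I * ω / ((M : ℂ) - 1) * w n t +
        ∑ m ∈ multiIdx N M, c n m * ∏ k, w k t ^ m k) t := by
  have hM1 : ((M : ℂ) - 1) ≠ 0 := by
    have h1 : (M : ℂ) ≠ 1 := by
      intro h
      have : M = 1 := by exact_mod_cast h
      omega
    exact sub_ne_zero.mpr h1
  have hιω : (Complex.I * (ω : ℂ)) ≠ 0 :=
    mul_ne_zero Complex.I_ne_zero (by exact_mod_cast hω)
  set S := ∑ m ∈ multiIdx N M, c n m * ∏ k, z (τ t) k ^ m k with hS
  set E : ℝ → ℂ := fun s => Complex.exp (Complex.I * ω * s / ((M : ℂ) - 1)) with hEdef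
  -- derivative of E
  have hE : HasDerivAt E (Complex.I * ω / ((M : ℂ) - 1) * E t) t := by
    have h1 : HasDerivAt (fun ζ : ℂ => Complex.exp (Complex.I * ω * ζ / ((M : ℂ) - 1)))
        (Complex.I * ω / ((M : ℂ) - 1) * E t) (t : ℂ) := by
      have hinner : HasDerivAt (fun ζ : ℂ => Complex.I * ω * ζ / ((M : ℂ) - 1))
          (Complex.I * ω * 1 / ((M : ℂ) - 1)) (t : ℂ) :=
        ((hasDerivAt_id (t : ℂ)).const_mul (Complex.I * ω)).div_const ((M : ℂ) - 1)
      have := (Complex.hasDerivAt_exp (Complex.I * ω * t / ((M : ℂ) - 1))).comp (t : ℂ) hinner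
      refine this.congr_deriv ?_
      simp [hEdef]; ring
    exact h1.comp_ofReal
  -- derivative of τ
  have hτd : HasDerivAt τ (Complex.exp (Complex.I * ω * t)) t := by
    have h2 : HasDerivAt (fun ζ : ℂ => (Complex.exp (Complex.I * ω * ζ) - 1) / (Complex.I * ω))
        (Complex.exp (Complex.I * ω * t)) (t : ℂ) := by
      have hinner : HasDerivAt (fun ζ : ℂ => Complex.I * ω * ζ)
          (Complex.I * ω * 1) (t : ℂ) :=
        (hasDerivAt_id (t : ℂ)).const_mul (Complex.I * ω)
      have h3 := (Complex.hasDerivAt_exp (Complex.I * ω * t)).comp (t : ℂ) hinner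
      have h4 := (h3.sub_const 1).div_const (Complex.I * ω)
      refine h4.congr_deriv ?_
      field_simp
      exact div_self (by exact_mod_cast hω)
    have : τ = fun s : ℝ => (Complex.exp (Complex.I * ω * s) - 1) / (Complex.I * ω) :=
      funext hτ
    rw [this]
    exact h2.comp_ofReal
  -- derivative of s ↦ z (τ s) n
  have hzn : HasDerivAt (fun s : ℝ => z (τ s) n)
      (Complex.exp (Complex.I * ω * t) • S) t := by
    have := HasDerivAt.scomp (g₁ := fun ζ : ℂ => z ζ n) t (hz t n) hτd
    exact this
  -- product rule
  have hprod : HasDerivAt (fun s : ℝ => E s * z (τ s) n)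
      (Complex.I * ω / ((M : ℂ) - 1) * E t * z (τ t) n
        + E t * (Complex.exp (Complex.I * ω * t) • S)) t := hE.mul hzn
  have hkey : E t * Complex.exp (Complex.I * ω * t) = E t ^ M := by
    rw [hEdef]
    simp only
    rw [← Complex.exp_nat_mul, ← Complex.exp_add]
    congr 1
    field_simp
    ring
  have hEsum : ∀ m ∈ multiIdx N M, ∏ k, (E t * z (τ t) k) ^ m k
      = E t ^ M * ∏ k, z (τ t) k ^ m k := by
    intro m hm
    have hsum : ∑ k, m k = M := (Finset.mem_filter.mp hm).2
    rw [← hsum]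
    simp [mul_pow, Finset.prod_mul_distrib, Finset.prod_pow_eq_pow_sum]
  have hwn : w n = fun s : ℝ => E s * z (τ s) n := funext (hw n)
  simp only [hw]
  rw [hwn]
  have hsum2 : ∑ m ∈ multiIdx N M, c n m * ∏ k, (E t * z (τ t) k) ^ m k
      = E t * (Complex.exp (Complex.I * ω * t) • S) := by
    rw [hS, smul_eq_mul, Finset.mul_sum, Finset.mul_sum]
    refine Finset.sum_congr rfl fun m hm => ?_
    rw [hEsum m hm, ← mul_assoc (E t), hkey]
    ring
  rw [hsum2]
  convert hprod using 1
  ring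
end

section
/- Let N ≥ 2 and M ≥ 2 be integers, ω a nonzero real number, c : Fin N → ((Fin N → ℕ) → ℂ) complex coefficients, z₀ : Fin N → ℂ, and K ∈ ℂ such that for every n, K·z₀(n) = (1 − M)·∑_{m : Fin N → ℕ, ∑_k m(k) = M} c(n)(m)·∏_{k} z₀(k)^{m(k)}. Define w(n)(t) := z₀(n)·exp(iωt/(M − 1))·(1 + K·(exp(iωt) − 1)/(iω))^{1/(1 − M)}, using the principal complex power. Then for every real t such that 1 + K·(exp(iωt) − 1)/(iω) lies in the slit plane ℂ ∖ (−∞, 0], and every n, w(n) has derivative at t equal to (iω/(M − 1))·w(n)(t) + ∑_{m : Fin N → ℕ, ∑_k m(k) = M} c(n)(m)·∏_{k} w(k)(t)^{m(k)}. -/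
open Finset Complex

/-- The explicit functions
`w_n(t) = z_n(0) exp(iωt/(M-1)) (1 + K (exp(iωt) - 1)/(iω))^{1/(1-M)}`
(principal complex power) solve the modified autonomous system
`ẇ_n = (iω/(M-1)) w_n + ∑_m c_{n,m} ∏_k w_k^{m_k}` at every real time `t` for which
the base of the power lies in the slit plane, provided the algebraic constraints
`K z_n(0) = (1-M) ∑_m c_{n,m} ∏_k z_k(0)^{m_k}` hold. -/
theorem statement4 (N M : ℕ) (hN : 2 ≤ N) (hM : 2 ≤ M)
    (ω : ℝ) (hω : ω ≠ 0)
    (c : Fin N → (Fin N → ℕ) → ℂ) (z₀ : Fin N → ℂ) (K : ℂ)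
    (hK : ∀ n : Fin N,
      K * z₀ n = (1 - (M : ℂ)) * ∑ m ∈ multiIdx N M, c n m * ∏ k, z₀ k ^ m k)
    (w : Fin N → ℝ → ℂ)
    (hw : ∀ (n : Fin N) (t : ℝ),
      w n t = z₀ n * Complex.exp (Complex.I * ω * t / ((M : ℂ) - 1)) *
        (1 + K * (Complex.exp (Complex.I * ω * t) - 1) / (Complex.I * ω)) ^
          ((1 : ℂ) / (1 - (M : ℂ))))
    (t : ℝ)
    (ht : 1 + K * (Complex.exp (Complex.I * ω * t) - 1) / (Complex.I * ω) ∈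
      Complex.slitPlane)
    (n : Fin N) :
    HasDerivAt (w n)
      (Complex.I * ω / ((M : ℂ) - 1) * w n t +
        ∑ m ∈ multiIdx N M, c n m * ∏ k, w k t ^ m k) t := by
  have hM1 : (M : ℂ) ≠ 1 := by
    have : M ≠ 1 := by omega
    exact_mod_cast this
  have hμ : (M : ℂ) - 1 ≠ 0 := sub_ne_zero.mpr hM1
  have h1M : 1 - (M : ℂ) ≠ 0 := sub_ne_zero.mpr (Ne.symm hM1)
  have ha : (Complex.I * (ω : ℂ)) ≠ 0 :=
    mul_ne_zero Complex.I_ne_zero (Complex.ofReal_ne_zero.mpr hω)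
  set p : ℂ := (1 : ℂ) / (1 - (M : ℂ)) with hp
  set E : ℂ := Complex.exp (Complex.I * ω * t / ((M : ℂ) - 1)) with hE
  set B : ℂ := 1 + K * (Complex.exp (Complex.I * ω * t) - 1) / (Complex.I * ω) with hB
  have hB0 : B ≠ 0 := Complex.slitPlane_ne_zero ht
  -- derivative of the exponential factor (complex variable)
  have d1 : HasDerivAt (fun s : ℂ => Complex.exp (Complex.I * ω * s / ((M : ℂ) - 1)))
      (E * (Complex.I * ω / ((M : ℂ) - 1))) (t : ℂ) := by
    have h0 : HasDerivAt (fun s : ℂ => Complex.I * ω * s / ((M : ℂ) - 1))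
        (Complex.I * ω / ((M : ℂ) - 1)) (t : ℂ) := by
      simpa using ((hasDerivAt_id (t : ℂ)).const_mul (Complex.I * ω)).div_const ((M : ℂ) - 1)
    exact h0.cexp
  -- derivative of the base of the power (complex variable)
  have d2 : HasDerivAt
      (fun s : ℂ => 1 + K * (Complex.exp (Complex.I * ω * s) - 1) / (Complex.I * ω))
      (K * Complex.exp (Complex.I * ω * t)) (t : ℂ) := by
    have h0 : HasDerivAt (fun s : ℂ => Complex.I * ω * s) (Complex.I * ω) (t : ℂ) := by
      simpa using (hasDerivAt_id (t : ℂ)).const_mul (Complex.I * ω)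
    have h1 := (((h0.cexp.sub_const 1).const_mul K).div_const (Complex.I * ω)).const_add 1
    refine h1.congr_deriv ?_
    rw [mul_div_assoc, mul_div_cancel_right₀ _ ha]
  have d3 : HasDerivAt
      (fun s : ℂ =>
        (1 + K * (Complex.exp (Complex.I * ω * s) - 1) / (Complex.I * ω)) ^ p)
      (p * B ^ (p - 1) * (K * Complex.exp (Complex.I * ω * t))) (t : ℂ) :=
    d2.cpow_const ht
  have dg : HasDerivAt
      (fun s : ℂ => z₀ n * Complex.exp (Complex.I * ω * s / ((M : ℂ) - 1)) *
        (1 + K * (Complex.exp (Complex.I * ω * s) - 1) / (Complex.I * ω)) ^ p)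
      (z₀ n * (E * (Complex.I * ω / ((M : ℂ) - 1)) * B ^ p
        + E * (p * B ^ (p - 1) * (K * Complex.exp (Complex.I * ω * t))))) (t : ℂ) := by
    simpa only [← mul_assoc, Pi.mul_apply] using (d1.mul d3).const_mul (z₀ n)
  have dgr := dg.comp_ofReal
  have hwn : w n = fun s : ℝ => z₀ n * Complex.exp (Complex.I * ω * s / ((M : ℂ) - 1)) *
      (1 + K * (Complex.exp (Complex.I * ω * s) - 1) / (Complex.I * ω)) ^ p :=
    funext fun s => hw n s
  -- the algebraic identity between the two candidate derivatives
  have hwk : ∀ k : Fin N, w k t = z₀ k * (E * B ^ p) := by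
    intro k
    rw [hw k t, ← hE, ← hB, mul_assoc]
  have hsum : ∀ m ∈ multiIdx N M, ∏ k, w k t ^ m k = (∏ k, z₀ k ^ m k) * (E * B ^ p) ^ M := by
    intro m hm
    have hmM : ∑ k, m k = M := (Finset.mem_filter.mp hm).2
    calc ∏ k, w k t ^ m k = ∏ k, (z₀ k ^ m k * (E * B ^ p) ^ m k) := by
          refine Finset.prod_congr rfl fun k _ => ?_
          rw [hwk k, mul_pow]
        _ = (∏ k, z₀ k ^ m k) * ∏ k, (E * B ^ p) ^ m k := Finset.prod_mul_distrib
        _ = (∏ k, z₀ k ^ m k) * (E * B ^ p) ^ M := by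
          rw [Finset.prod_pow_eq_pow_sum, hmM]
  have hS : ∑ m ∈ multiIdx N M, c n m * ∏ k, w k t ^ m k
      = (∑ m ∈ multiIdx N M, c n m * ∏ k, z₀ k ^ m k) * (E * B ^ p) ^ M := by
    rw [Finset.sum_mul]
    refine Finset.sum_congr rfl fun m hm => ?_
    rw [hsum m hm, ← mul_assoc]
  have hSval : (∑ m ∈ multiIdx N M, c n m * ∏ k, z₀ k ^ m k) = K * z₀ n * p := by
    have h := hK n
    rw [hp]
    field_simp
    linear_combination (-1 : ℂ) * h
  have hEM : E ^ M = E * Complex.exp (Complex.I * ω * t) := by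
    rw [hE, ← Complex.exp_nat_mul, ← Complex.exp_add]
    congr 1
    field_simp
    ring
  have hBM : (B ^ p) ^ M = B ^ (p - 1) := by
    rw [← Complex.cpow_nat_mul]
    congr 1
    rw [hp]
    field_simp
    ring
  have goalEq : Complex.I * ω / ((M : ℂ) - 1) * w n t +
      ∑ m ∈ multiIdx N M, c n m * ∏ k, w k t ^ m k
      = z₀ n * (E * (Complex.I * ω / ((M : ℂ) - 1)) * B ^ p
        + E * (p * B ^ (p - 1) * (K * Complex.exp (Complex.I * ω * t)))) := by
    rw [hwk n, hS, hSval, mul_pow, hEM, hBM]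
    ring
  rw [goalEq, hwn]
  exact dgr
end

section
/- (Example 2, N = 2, M = 4, complex form.) Let ω be a nonzero real number, let c : Fin 2 → Fin 5 → ℂ be ten complex coefficients (c(n)(m) = a_{nm} + i·b_{nm}), let z₀ : Fin 2 → ℂ and K ∈ ℂ satisfy, for n = 1, 2, the constraint K·z₀(n) = −3·∑_{m=0}^{4} c(n)(m)·z₀(1)^{4−m}·z₀(2)^{m}. Define ζ(n)(t) := z₀(n)·exp(iωt/3)·(1 + K·(exp(iωt) − 1)/(iω))^{−1/3}, using the principal complex power. Then for every real t such that 1 + K·(exp(iωt) − 1)/(iω) lies in the slit plane ℂ ∖ (−∞, 0], and for n = 1, 2, ζ(n) has derivative at t equal to (iω/3)·ζ(n)(t) + ∑_{m=0}^{4} c(n)(m)·ζ(1)(t)^{4−m}·ζ(2)(t)^{m}. -/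
open Finset Complex

/-- Example 2 (`N = 2`, `M = 4`, complex form): the explicit functions
`ζ_n(t) = z_n(0) exp(iωt/3) (1 + K (exp(iωt) - 1)/(iω))^{-1/3}`
(principal complex power) solve the modified autonomous system
`ζ̇_n = (iω/3) ζ_n + ∑_{m=0}^{4} c_{n,m} ζ_1^{4-m} ζ_2^{m}`, `n = 1, 2`,
at every real time `t` for which the base of the power lies in the slit plane,
provided the constraints `K z_n(0) = -3 ∑_{m=0}^{4} c_{n,m} z_1(0)^{4-m} z_2(0)^{m}`
hold. -/
theorem statement6 (ω : ℝ) (hω : ω ≠ 0)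
    (c : Fin 2 → Fin 5 → ℂ) (z₀ : Fin 2 → ℂ) (K : ℂ)
    (hK : ∀ n : Fin 2,
      K * z₀ n = -3 * ∑ m : Fin 5, c n m * z₀ 0 ^ (4 - (m : ℕ)) * z₀ 1 ^ (m : ℕ))
    (ζ : Fin 2 → ℝ → ℂ)
    (hζ : ∀ (n : Fin 2) (t : ℝ),
      ζ n t = z₀ n * Complex.exp (Complex.I * ω * t / 3) *
        (1 + K * (Complex.exp (Complex.I * ω * t) - 1) / (Complex.I * ω)) ^
          (-(1 : ℂ) / 3))
    (t : ℝ)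
    (ht : 1 + K * (Complex.exp (Complex.I * ω * t) - 1) / (Complex.I * ω) ∈
      Complex.slitPlane)
    (n : Fin 2) :
    HasDerivAt (ζ n)
      (Complex.I * ω / 3 * ζ n t +
        ∑ m : Fin 5, c n m * ζ 0 t ^ (4 - (m : ℕ)) * ζ 1 t ^ (m : ℕ)) t := by
  have hIω : (Complex.I * ω) ≠ 0 := by
    exact mul_ne_zero Complex.I_ne_zero (by exact_mod_cast hω)
  -- derivative of s ↦ I*ω*s (over ℝ)
  have hid : HasDerivAt (fun s : ℝ => (s : ℂ)) 1 t := by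
    simpa using (hasDerivAt_id (t : ℂ)).comp_ofReal
  have h1 : HasDerivAt (fun s : ℝ => Complex.I * ω * s) (Complex.I * ω) t := by
    simpa using hid.const_mul (Complex.I * (ω : ℂ))
  have hE : HasDerivAt (fun s : ℝ => Complex.exp (Complex.I * ω * s))
      (Complex.exp (Complex.I * ω * t) * (Complex.I * ω)) t := h1.cexp
  have he : HasDerivAt (fun s : ℝ => Complex.exp (Complex.I * ω * s / 3))
      (Complex.exp (Complex.I * ω * t / 3) * (Complex.I * ω / 3)) t := by
    have := (h1.div_const 3).cexp
    simpa [mul_div_assoc] using this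
  have hu : HasDerivAt
      (fun s : ℝ => 1 + K * (Complex.exp (Complex.I * ω * s) - 1) / (Complex.I * ω))
      (K * Complex.exp (Complex.I * ω * t)) t := by
    have := (((hE.sub_const 1).const_mul K).div_const (Complex.I * ω)).const_add 1
    refine this.congr_deriv ?_
    rw [mul_div_assoc, mul_div_cancel_right₀ _ hIω]
  have hv := ((Complex.hasStrictDerivAt_cpow_const (c := -(1:ℂ)/3) ht).hasDerivAt).comp t hu
  have hf := (he.const_mul (z₀ n)).mul hv
  have hfun : ζ n = fun s : ℝ => z₀ n * Complex.exp (Complex.I * ω * s / 3) *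
      (1 + K * (Complex.exp (Complex.I * ω * s) - 1) / (Complex.I * ω)) ^ (-(1 : ℂ) / 3) :=
    funext (hζ n)
  rw [hfun]
  refine hf.congr_deriv ?_
  symm
  simp only [Function.comp_apply, hζ]
  set e := Complex.exp (Complex.I * ω * t / 3) with he'
  set E := Complex.exp (Complex.I * ω * t) with hE'
  set u := 1 + K * (E - 1) / (Complex.I * ω) with hu'
  have hu0 : u ≠ 0 := Complex.slitPlane_ne_zero ht
  set v := u ^ (-(1:ℂ)/3) with hv'
  have hw : u ^ ((-(1:ℂ)/3) - 1) = v * (v * (v * v)) := by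
    rw [hv', ← Complex.cpow_add _ _ hu0, ← Complex.cpow_add _ _ hu0,
      ← Complex.cpow_add _ _ hu0]
    norm_num
  have he3 : E = e * (e * e) := by
    rw [he', hE', ← Complex.exp_add, ← Complex.exp_add]
    ring_nf
  have hK' := hK n
  simp only [Fin.sum_univ_five, show ((0:Fin 5):ℕ) = 0 from rfl,
    show ((1:Fin 5):ℕ) = 1 from rfl, show ((2:Fin 5):ℕ) = 2 from rfl,
    show ((3:Fin 5):ℕ) = 3 from rfl, show ((4:Fin 5):ℕ) = 4 from rfl] at hK' ⊢
  rw [hw, he3]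
  linear_combination (e^4 * v^4 / 3) * hK'
end
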